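/- Let p_1, ..., p_n be distinct positive real numbers and let r be a real number with −1 < r < 1. Then the Kwong matrix K_r(p_1,...,p_n) is positive definite. -/

import Mathlib

open Matrix

/-- The Kwong matrix: (i,j) entry is `(p i ^ r + p j ^ r) / (p i + p j)`. -/
noncomputable def kwong {n : ℕ} (p : Fin n → ℝ) (r : ℝ) : Matrix (Fin n) (Fin n) ℝ :=
  Matrix.of fun i j => (p i ^ r + p j ^ r) / (p i + p j)

lemma kwong_isHermitian {n : ℕ} (p : Fin n → ℝ) (r : ℝ) : (kwong p r).IsHermitian := by
  ext i j
  simp only [kwong, Matrix.conjTranspose_apply, Matrix.of_apply, star_trivial]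
  rw [add_comm (p j ^ r), add_comm (p j)]

/-- The inertia of a real symmetric matrix: the numbers of positive, zero and
negative eigenvalues, counted with multiplicity. -/
noncomputable def inertia {n : ℕ} (A : Matrix (Fin n) (Fin n) ℝ) (hA : A.IsHermitian) :
    ℕ × ℕ × ℕ :=
  ({i | 0 < hA.eigenvalues i}.ncard, {i | hA.eigenvalues i = 0}.ncard,
    {i | hA.eigenvalues i < 0}.ncard)


open MeasureTheory Real Set Filter Topology ENNReal

lemma integral_exp_neg_mul_Ioi_zero {b : ℝ} (hb : 0 < b) :
    ∫ t in Ioi (0:ℝ), Real.exp (-b * t) = b⁻¹ := by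
  have h := integral_comp_mul_left_Ioi (fun x => Real.exp (-x)) 0 hb
  simp only [mul_zero, integral_exp_neg_Ioi_zero, smul_eq_mul, mul_one] at h
  simp_rw [neg_mul]
  exact h

lemma cauchy_form_pos {n : ℕ} (p : Fin n → ℝ) (hpos : ∀ i, 0 < p i)
    (hinj : Function.Injective p) (w : Fin n → ℝ) (hw : w ≠ 0) :
    0 < ∑ i, ∑ j, w i * w j / (p i + p j) := by
  classical
  set h : ℝ → ℝ := fun t => ∑ i, w i * Real.exp (-p i * t) with hh
  -- each term integrable
  have hterm : ∀ i j : Fin n, IntegrableOn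
      (fun t => w i * w j * Real.exp (-(p i + p j) * t)) (Ioi (0:ℝ)) := by
    intro i j
    exact (exp_neg_integrableOn_Ioi (0:ℝ) (by have := hpos i; have := hpos j; positivity :
      (0:ℝ) < p i + p j)).const_mul (w i * w j)
  have hsq : ∀ t : ℝ, h t ^ 2 = ∑ i, ∑ j, w i * w j * Real.exp (-(p i + p j) * t) := by
    intro t
    rw [hh, sq, Finset.sum_mul_sum]
    refine Finset.sum_congr rfl fun i _ => Finset.sum_congr rfl fun j _ => ?_
    rw [mul_mul_mul_comm, ← Real.exp_add]
    congr 1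
    ring
  have hint : IntegrableOn (fun t => h t ^ 2) (Ioi (0:ℝ)) := by
    have : IntegrableOn (fun t => ∑ i, ∑ j : Fin n,
        w i * w j * Real.exp (-(p i + p j) * t)) (Ioi (0:ℝ)) :=
      integrable_finset_sum _ fun i _ => integrable_finset_sum _ fun j _ => hterm i j
    exact this.congr (ae_of_all _ fun t => (hsq t).symm)
  have hval : ∫ t in Ioi (0:ℝ), h t ^ 2 = ∑ i, ∑ j, w i * w j / (p i + p j) := by
    rw [integral_congr_ae (ae_of_all _ hsq)]
    rw [integral_finset_sum _ fun i _ => integrable_finset_sum _ fun j _ => hterm i j]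
    refine Finset.sum_congr rfl fun i _ => ?_
    rw [integral_finset_sum _ fun j _ => hterm i j]
    refine Finset.sum_congr rfl fun j _ => ?_
    rw [integral_const_mul, integral_exp_neg_mul_Ioi_zero
      (by have := hpos i; have := hpos j; positivity), div_eq_mul_inv]
  -- find dominant index
  obtain ⟨k, hk⟩ : ∃ k, w k ≠ 0 := Function.ne_iff.mp hw
  set S : Finset (Fin n) := Finset.univ.filter (fun i => w i ≠ 0) with hS
  have hkS : k ∈ S := by simp [hS, hk]
  obtain ⟨m, hmS, hmin⟩ := S.exists_min_image p ⟨k, hkS⟩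
  have hwm : w m ≠ 0 := by simpa [hS] using hmS
  -- tendsto of the renormalized sum
  have htend : Tendsto (fun t => ∑ i, w i * Real.exp ((p m - p i) * t)) atTop
      (𝓝 (∑ i, if i = m then w m else 0)) := by
    refine tendsto_finset_sum _ fun i _ => ?_
    by_cases him : i = m
    · subst him
      simpa using tendsto_const_nhds.congr (fun t : ℝ => by simp)
    · simp only [him, if_neg]
      by_cases hwi : w i = 0
      · simpa [hwi] using (tendsto_const_nhds : Tendsto (fun _ : ℝ => (0:ℝ)) atTop (𝓝 0))
      · have hiS : i ∈ S := by simp [hS, hwi]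
        have hlt : p m < p i :=
          lt_of_le_of_ne (hmin i hiS) (fun hpe => him (hinj hpe.symm))
        have h1 : Tendsto (fun t : ℝ => (p m - p i) * t) atTop atBot :=
          tendsto_id.const_mul_atTop_of_neg (by linarith)
        have h2 : Tendsto (fun t : ℝ => Real.exp ((p m - p i) * t)) atTop (𝓝 0) :=
          Real.tendsto_exp_atBot.comp h1
        simpa using h2.const_mul (w i)
  have hlim : (∑ i, if i = m then w m else 0) = w m := by simp
  rw [hlim] at htend
  -- eventually nonzero
  have hev : ∀ᶠ t in atTop, (∑ i, w i * Real.exp ((p m - p i) * t)) ≠ 0 :=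
    htend.eventually_ne hwm
  obtain ⟨T, hT⟩ := eventually_atTop.mp hev
  -- h t ≠ 0 for t ≥ T
  have hhne : ∀ t : ℝ, T ≤ t → h t ≠ 0 := by
    intro t ht
    have hfac : h t = Real.exp (-p m * t) * ∑ i, w i * Real.exp ((p m - p i) * t) := by
      rw [hh, Finset.mul_sum]
      refine Finset.sum_congr rfl fun i _ => ?_
      rw [mul_left_comm, ← Real.exp_add]
      congr 2
      ring
    rw [hfac]
    exact mul_ne_zero (Real.exp_ne_zero _) (hT t ht)
  -- positivity of the integral
  rw [← hval]
  rw [setIntegral_pos_iff_support_of_nonneg_ae (ae_of_all _ fun t => sq_nonneg (h t)) hint]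
  have hsub : Ici (max T 1) ⊆ (Function.support fun t => h t ^ 2) ∩ Ioi 0 := by
    intro t ht
    simp only [mem_Ici, max_le_iff] at ht
    refine ⟨pow_ne_zero 2 (hhne t ht.1), lt_of_lt_of_le one_pos ht.2⟩
  calc (0:ℝ≥0∞) < volume (Ici (max T 1)) := by
        rw [Real.volume_Ici]; exact ENNReal.zero_lt_top
    _ ≤ _ := measure_mono hsub

lemma contOn_aux {r : ℝ} {x : ℝ} (hx : 0 < x) :
    ContinuousOn (fun l : ℝ => l ^ (r - 1) * (x / (x + l))) (Ioi 0) := by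
  refine (continuousOn_id.rpow_const fun l hl => Or.inl (ne_of_gt hl)).mul
    (continuousOn_const.div (continuousOn_const.add continuousOn_id) fun l hl => ?_)
  have : (0:ℝ) < l := hl
  positivity

lemma integrableOn_aux {r : ℝ} (hr0 : 0 < r) (hr1 : r < 1) {x : ℝ} (hx : 0 < x) :
    IntegrableOn (fun l : ℝ => l ^ (r - 1) * (x / (x + l))) (Ioi 0) := by
  rw [← Ioc_union_Ioi_eq_Ioi (zero_le_one (α := ℝ)), integrableOn_union]
  constructor
  · -- on Ioc 0 1, dominated by l ^ (r-1)
    have hg : IntegrableOn (fun l : ℝ => l ^ (r - 1)) (Ioc (0:ℝ) 1) := by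
      have := intervalIntegral.intervalIntegrable_rpow' (a := 0) (b := 1)
        (r := r - 1) (by linarith)
      rwa [intervalIntegrable_iff, uIoc_of_le zero_le_one] at this
    refine hg.mono' (((contOn_aux hx).mono Ioc_subset_Ioi_self).aestronglyMeasurable
      measurableSet_Ioc) ?_
    refine (ae_restrict_iff' measurableSet_Ioc).2 (ae_of_all _ fun l hl => ?_)
    have hl0 : (0:ℝ) < l := hl.1
    have h1 : x / (x + l) ≤ 1 := by
      rw [div_le_one (by positivity)]; linarith
    have h2 : 0 ≤ x / (x + l) := by positivity
    rw [Real.norm_eq_abs, abs_of_nonneg (by positivity)]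
    calc l ^ (r - 1) * (x / (x + l)) ≤ l ^ (r - 1) * 1 := by
          exact mul_le_mul_of_nonneg_left h1 (by positivity)
      _ = l ^ (r - 1) := mul_one _
  · -- on Ioi 1, dominated by x * l ^ (r-2)
    have hg : IntegrableOn (fun l : ℝ => x * l ^ (r - 2)) (Ioi (1:ℝ)) :=
      (integrableOn_Ioi_rpow_of_lt (by linarith) one_pos).const_mul x
    refine hg.mono' (((contOn_aux hx).mono (Ioi_subset_Ioi zero_le_one)).aestronglyMeasurable
      measurableSet_Ioi) ?_
    refine (ae_restrict_iff' measurableSet_Ioi).2 (ae_of_all _ fun l hl => ?_)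
    have hl1 : (1:ℝ) < l := hl
    have hl0 : (0:ℝ) < l := lt_trans one_pos hl1
    rw [Real.norm_eq_abs, abs_of_nonneg (by positivity)]
    have h1 : x / (x + l) ≤ x / l :=
      div_le_div_of_nonneg_left hx.le hl0 (by linarith)
    calc l ^ (r - 1) * (x / (x + l)) ≤ l ^ (r - 1) * (x / l) :=
          mul_le_mul_of_nonneg_left h1 (by positivity)
      _ = x * l ^ (r - 2) := by
          rw [show r - 2 = (r - 1) + (-1) by ring, Real.rpow_add hl0, Real.rpow_neg_one]
          ring

lemma integral_aux {r : ℝ} (hr0 : 0 < r) (hr1 : r < 1) {x : ℝ} (hx : 0 < x) :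
    ∫ l in Ioi (0:ℝ), l ^ (r - 1) * (x / (x + l)) =
      x ^ r * ∫ l in Ioi (0:ℝ), l ^ (r - 1) * ((1:ℝ) / (1 + l)) := by
  have h := integral_comp_mul_left_Ioi (fun l : ℝ => l ^ (r - 1) * (x / (x + l))) 0 hx
  rw [mul_zero] at h
  have h2 : ∫ l in Ioi (0:ℝ), (x * l) ^ (r - 1) * (x / (x + x * l)) =
      ∫ l in Ioi (0:ℝ), x ^ (r - 1) * (l ^ (r - 1) * ((1:ℝ) / (1 + l))) := by
    refine setIntegral_congr_fun measurableSet_Ioi fun l hl => ?_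
    have hl0 : (0:ℝ) < l := hl
    rw [Real.mul_rpow hx.le hl0.le]
    have : x + x * l = x * (1 + l) := by ring
    rw [this, div_mul_eq_div_div_swap, div_right_comm, div_self hx.ne']
    ring
  rw [h2, integral_const_mul, smul_eq_mul] at h
  have hxx : x * x ^ (r - 1) = x ^ r := by
    have h4 := (Real.rpow_add hx 1 (r - 1)).symm
    rw [Real.rpow_one, show (1:ℝ) + (r - 1) = r by ring] at h4
    exact h4
  rw [← hxx, mul_assoc, h, ← mul_assoc, mul_inv_cancel₀ hx.ne', one_mul]

lemma I_pos {r : ℝ} (hr0 : 0 < r) (hr1 : r < 1) :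
    0 < ∫ l in Ioi (0:ℝ), l ^ (r - 1) * ((1:ℝ) / (1 + l)) := by
  have hint := integrableOn_aux hr0 hr1 one_pos
  rw [setIntegral_pos_iff_support_of_nonneg_ae ?_ hint]
  · refine lt_of_lt_of_le ?_ (measure_mono (?_ : Ioi (0:ℝ) ⊆ _))
    · rw [Real.volume_Ioi]; exact ENNReal.zero_lt_top
    · intro l hl
      have hl0 : (0:ℝ) < l := hl
      refine ⟨ne_of_gt ?_, hl⟩
      have : (0:ℝ) < 1 / (1 + l) := by positivity
      positivity
  · refine (ae_restrict_iff' measurableSet_Ioi).2 (ae_of_all _ fun l hl => ?_)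
    have hl0 : (0:ℝ) < l := hl
    positivity

/-- The key quadratic form positivity for `0 < r < 1`. -/
lemma kwong_form_pos_of_pos {n : ℕ} (p : Fin n → ℝ) (hpos : ∀ i, 0 < p i)
    (hinj : Function.Injective p) {r : ℝ} (hr0 : 0 < r) (hr1 : r < 1)
    (v : Fin n → ℝ) (hv : v ≠ 0) :
    0 < ∑ i, ∑ j, v i * v j * ((p i ^ r + p j ^ r) / (p i + p j)) := by
  classical
  set I : ℝ := ∫ l in Ioi (0:ℝ), l ^ (r - 1) * ((1:ℝ) / (1 + l)) with hI
  have hIpos : 0 < I := I_pos hr0 hr1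
  set F : ℝ → ℝ := fun l => ∑ i, ∑ j, v i * v j / (p i + p j) *
    (l ^ (r - 1) * (p i / (p i + l)) + l ^ (r - 1) * (p j / (p j + l))) with hF
  have hterm : ∀ i j : Fin n, IntegrableOn (fun l : ℝ => v i * v j / (p i + p j) *
      (l ^ (r - 1) * (p i / (p i + l)) + l ^ (r - 1) * (p j / (p j + l)))) (Ioi 0) :=
    fun i j => (((integrableOn_aux hr0 hr1 (hpos i)).add
      (integrableOn_aux hr0 hr1 (hpos j))).const_mul _)
  have hFint : IntegrableOn F (Ioi 0) :=
    integrable_finset_sum _ fun i _ => integrable_finset_sum _ fun j _ => hterm i j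
  -- the value of the integral of F
  have hFval : ∫ l in Ioi (0:ℝ), F l =
      (∑ i, ∑ j, v i * v j * ((p i ^ r + p j ^ r) / (p i + p j))) * I := by
    rw [hF, integral_finset_sum _ fun i _ => integrable_finset_sum _ fun j _ => hterm i j,
      Finset.sum_mul]
    refine Finset.sum_congr rfl fun i _ => ?_
    rw [integral_finset_sum _ fun j _ => hterm i j, Finset.sum_mul]
    refine Finset.sum_congr rfl fun j _ => ?_
    rw [integral_const_mul, integral_add (integrableOn_aux hr0 hr1 (hpos i))
      (integrableOn_aux hr0 hr1 (hpos j)), integral_aux hr0 hr1 (hpos i),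
      integral_aux hr0 hr1 (hpos j), ← hI]
    ring
  -- pointwise positivity of F on Ioi 0
  have hFpos : ∀ l ∈ Ioi (0:ℝ), 0 < F l := by
    intro l hl
    have hl0 : (0:ℝ) < l := hl
    set w : Fin n → ℝ := fun i => v i * p i / (p i + l) with hw
    set u : Fin n → ℝ := fun i => v i / (p i + l) with hu
    have hival : ∀ i j : Fin n, v i * v j / (p i + p j) *
        (l ^ (r - 1) * (p i / (p i + l)) + l ^ (r - 1) * (p j / (p j + l))) =
        l ^ (r - 1) * (2 * (w i * w j / (p i + p j)) + l * (u i * u j)) := by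
      intro i j
      have h1 : (0:ℝ) < p i + p j := by have := hpos i; have := hpos j; positivity
      have h2 : (0:ℝ) < p i + l := by have := hpos i; positivity
      have h3 : (0:ℝ) < p j + l := by have := hpos j; positivity
      rw [hw, hu]
      field_simp
      ring
    have hFeq : F l = l ^ (r - 1) *
        (2 * (∑ i, ∑ j, w i * w j / (p i + p j)) + l * (∑ i, u i) ^ 2) := by
      rw [hF]
      simp only []
      rw [Finset.sum_congr rfl fun i _ => Finset.sum_congr rfl fun j _ => hival i j]
      rw [sq, Finset.sum_mul_sum]
      simp only [Finset.mul_sum, Finset.sum_add_distrib, ← Finset.sum_add_distrib]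
    have hwne : w ≠ 0 := by
      obtain ⟨k, hk⟩ := Function.ne_iff.mp hv
      refine Function.ne_iff.mpr ⟨k, ?_⟩
      have h2 : (0:ℝ) < p k + l := by have := hpos k; positivity
      simp only [hw, Pi.zero_apply]
      exact div_ne_zero (mul_ne_zero hk (hpos k).ne') h2.ne'
    have hC : 0 < ∑ i, ∑ j, w i * w j / (p i + p j) :=
      cauchy_form_pos p hpos hinj w hwne
    rw [hFeq]
    have h1 : (0:ℝ) < l ^ (r - 1) := Real.rpow_pos_of_pos hl0 _
    have h2 : 0 ≤ l * (∑ i, u i) ^ 2 := by positivity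
    nlinarith
  -- positivity of the integral of F
  have hIntPos : 0 < ∫ l in Ioi (0:ℝ), F l := by
    rw [setIntegral_pos_iff_support_of_nonneg_ae ?_ hFint]
    · refine lt_of_lt_of_le ?_ (measure_mono (?_ : Ioi (0:ℝ) ⊆ _))
      · rw [Real.volume_Ioi]; exact ENNReal.zero_lt_top
      · exact fun l hl => ⟨ne_of_gt (hFpos l hl), hl⟩
    · exact (ae_restrict_iff' measurableSet_Ioi).2
        (ae_of_all _ fun l hl => (hFpos l hl).le)
  rw [hFval] at hIntPos
  by_contra hcon
  push_neg at hcon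
  nlinarith

lemma kwong_form_pos {n : ℕ} (p : Fin n → ℝ) (hpos : ∀ i, 0 < p i)
    (hinj : Function.Injective p) {r : ℝ} (hr1 : -1 < r) (hr2 : r < 1)
    (v : Fin n → ℝ) (hv : v ≠ 0) :
    0 < ∑ i, ∑ j, v i * v j * ((p i ^ r + p j ^ r) / (p i + p j)) := by
  rcases lt_trichotomy r 0 with hr | hr | hr
  · -- negative case: reduce to s = -r
    set s : ℝ := -r with hs
    have hs0 : 0 < s := by simp [hs]; linarith
    have hs1 : s < 1 := by simp [hs]; linarith
    set w : Fin n → ℝ := fun i => v i * p i ^ r with hw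
    have hwne : w ≠ 0 := by
      obtain ⟨k, hk⟩ := Function.ne_iff.mp hv
      exact Function.ne_iff.mpr ⟨k, mul_ne_zero hk (Real.rpow_pos_of_pos (hpos k) r).ne'⟩
    have hkey : ∀ i j : Fin n, v i * v j * ((p i ^ r + p j ^ r) / (p i + p j)) =
        w i * w j * ((p i ^ s + p j ^ s) / (p i + p j)) := by
      intro i j
      have hself : ∀ i : Fin n, p i ^ r * p i ^ s = 1 := by
        intro i
        rw [← Real.rpow_add (hpos i), hs, add_neg_cancel, Real.rpow_zero]
      have hnum : p i ^ r * p j ^ r * (p i ^ s + p j ^ s) = p i ^ r + p j ^ r := by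
        rw [mul_add]
        rw [show p i ^ r * p j ^ r * p i ^ s = p j ^ r * (p i ^ r * p i ^ s) by ring,
          show p i ^ r * p j ^ r * p j ^ s = p i ^ r * (p j ^ r * p j ^ s) by ring,
          hself i, hself j, mul_one, mul_one, add_comm]
      rw [hw]
      rw [show v i * p i ^ r * (v j * p j ^ r) * ((p i ^ s + p j ^ s) / (p i + p j)) =
        v i * v j * (p i ^ r * p j ^ r * (p i ^ s + p j ^ s) / (p i + p j)) by ring, hnum]
    rw [Finset.sum_congr rfl fun i _ => Finset.sum_congr rfl fun j _ => hkey i j]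
    exact kwong_form_pos_of_pos p hpos hinj hs0 hs1 w hwne
  · -- r = 0
    subst hr
    have hkey : ∀ i j : Fin n, v i * v j * ((p i ^ (0:ℝ) + p j ^ (0:ℝ)) / (p i + p j)) =
        2 * (v i * v j / (p i + p j)) := by
      intro i j
      rw [Real.rpow_zero, Real.rpow_zero]
      ring
    rw [Finset.sum_congr rfl fun i _ => Finset.sum_congr rfl fun j _ => hkey i j]
    simp only [← Finset.mul_sum]
    have := cauchy_form_pos p hpos hinj v hv
    linarith
  · exact kwong_form_pos_of_pos p hpos hinj hr hr2 v hv


/-- for distinct positive `p i` and `-1 < r < 1`, the Kwong matrix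
`Kᵣ` is positive definite. -/
theorem kwong_posDef {n : ℕ} (p : Fin n → ℝ)
    (hpos : ∀ i, 0 < p i) (hinj : Function.Injective p)
    (r : ℝ) (hr1 : -1 < r) (hr2 : r < 1) :
    (kwong p r).PosDef := by
  refine posDef_iff_dotProduct_mulVec.2 ⟨kwong_isHermitian p r, fun x hx => ?_⟩
  have key := kwong_form_pos p hpos hinj hr1 hr2 x hx
  have hdp : dotProduct (star x) (kwong p r *ᵥ x) =
      ∑ i, ∑ j, x i * x j * ((p i ^ r + p j ^ r) / (p i + p j)) := by
    simp only [dotProduct, mulVec, star_trivial, kwong, Matrix.of_apply]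
    refine Finset.sum_congr rfl fun i _ => ?_
    rw [Finset.mul_sum]
    refine Finset.sum_congr rfl fun j _ => ?_
    ring
  rw [hdp]
  exact key
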